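/- Let A be a real unital Banach algebra and j : ℝ × ℝ → A a twice continuously differentiable map such that j(s,t)² = −1 for all (s,t) and such that the Cauchy–Riemann equation ∂_t j = j · (∂_s j) holds at every point. Then at every point, ∂²_s j + ∂²_t j = 2 · j · (∂_s j)². -/

import Mathlib

/-- Let `A` be a real unital Banach algebra and
`j : ℝ × ℝ → A` a C² map with `j(s,t)² = -1` pointwise, satisfying the
Cauchy–Riemann equation `∂_t j = j · ∂_s j`. Then
`∂²_s j + ∂²_t j = 2·j·(∂_s j)²` at every point. -/
theorem stmt14 (A : Type*) [NormedRing A] [NormedAlgebra ℝ A]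
    (j : ℝ × ℝ → A) (hsmooth : ContDiff ℝ 2 j)
    (hsq : ∀ p : ℝ × ℝ, j p * j p = -1)
    (hCR : ∀ p : ℝ × ℝ, fderiv ℝ j p (0, 1) = j p * fderiv ℝ j p (1, 0)) :
    ∀ p : ℝ × ℝ,
      fderiv ℝ (fun q => fderiv ℝ j q (1, 0)) p (1, 0) +
        fderiv ℝ (fun q => fderiv ℝ j q (0, 1)) p (0, 1) =
      2 * (j p * (fderiv ℝ j p (1, 0) * fderiv ℝ j p (1, 0))) := by
  intro p
  have hj : Differentiable ℝ j := hsmooth.differentiable two_ne_zero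
  have h2 : ContDiff ℝ ((1 : ℕ) + 1) j := by exact_mod_cast hsmooth
  have hf' : ContDiff ℝ 1 (fderiv ℝ j) := (contDiff_succ_iff_fderiv.mp h2).2.2
  have hf'd : Differentiable ℝ (fderiv ℝ j) := hf'.differentiable one_ne_zero
  -- evaluation maps
  have hGdiff : ∀ v : ℝ × ℝ, Differentiable ℝ (fun q => fderiv ℝ j q v) := by
    intro v
    exact (ContinuousLinearMap.apply ℝ A v).differentiable.comp hf'd
  have heval : ∀ v w : ℝ × ℝ,
      fderiv ℝ (fun q => fderiv ℝ j q v) p w = fderiv ℝ (fderiv ℝ j) p w v := by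
    intro v w
    have h : HasFDerivAt (fun q => fderiv ℝ j q v)
        ((ContinuousLinearMap.apply ℝ A v).comp (fderiv ℝ (fderiv ℝ j) p)) p :=
      (ContinuousLinearMap.apply ℝ A v).hasFDerivAt.comp p (hf'd p).hasFDerivAt
    rw [h.fderiv]; rfl
  have hsymm : ∀ v w : ℝ × ℝ,
      fderiv ℝ (fderiv ℝ j) p v w = fderiv ℝ (fderiv ℝ j) p w v := by
    intro v w
    exact second_derivative_symmetric (fun y => (hj y).hasFDerivAt)
      ((hf'd p).hasFDerivAt) v w
  -- product rule at p for q ↦ j q * fderiv ℝ j q (1,0)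
  have hprod : ∀ w : ℝ × ℝ,
      fderiv ℝ (fun q => j q * fderiv ℝ j q (1, 0)) p w =
        fderiv ℝ j p w * fderiv ℝ j p (1, 0) +
          j p * fderiv ℝ (fun q => fderiv ℝ j q (1, 0)) p w := by
    intro w
    have := fderiv_mul' (𝕜 := ℝ) (hj p)
      ((hGdiff (1, 0)) p)
    have h := congrArg (fun L => L w) this
    simp only [ContinuousLinearMap.add_apply, ContinuousLinearMap.smul_apply,
      ContinuousLinearMap.smulRight_apply, smul_eq_mul, Pi.mul_def,
      MulOpposite.smul_eq_mul_unop, MulOpposite.unop_op] at h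
    rw [h, add_comm]
  -- rewrite t-derivatives using CR
  have hfun : (fun q => fderiv ℝ j q (0, 1)) = fun q => j q * fderiv ℝ j q (1, 0) := by
    funext q; exact hCR q
  set js := fderiv ℝ j p (1, 0) with hjs
  set jss := fderiv ℝ (fun q => fderiv ℝ j q (1, 0)) p (1, 0) with hjss
  have hmix : fderiv ℝ (fun q => fderiv ℝ j q (1, 0)) p (0, 1)
      = js * js + j p * jss := by
    rw [heval (1, 0) (0, 1), hsymm, ← heval (0, 1) (1, 0), hfun, hprod]
  have htt : fderiv ℝ (fun q => fderiv ℝ j q (0, 1)) p (0, 1)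
      = fderiv ℝ j p (0, 1) * js + j p * (js * js + j p * jss) := by
    rw [hfun, hprod, hmix]
  rw [htt, hCR p]
  have hneg : j p * (j p * jss) = -jss := by
    rw [← mul_assoc, hsq p, neg_one_mul]
  calc jss + (j p * js * js + j p * (js * js + j p * jss))
      = jss + (j p * (js * js) + (j p * (js * js) + j p * (j p * jss))) := by
        rw [mul_add, mul_assoc]
    _ = 2 * (j p * (js * js)) := by rw [hneg, two_mul]; abel
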